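/- arXiv:2402.18360 — 4 statements merged into one kernel-verified Lean document; each statement's English description precedes it below -/
import Mathlib

section
/- Similarity-based analogical proportions satisfy p-determinism: for every L-algebra A and elements a, d ∈ A, a : a ≈_A a : d holds if and only if d = a. -/
/-- Terms over a language `L` of function symbols with arities `ar`,
with variables indexed by `ℕ`. -/
inductive Term (L : Type) (ar : L → ℕ) : Type
  | var : ℕ → Term L ar
  | app : (f : L) → (Fin (ar f) → Term L ar) → Term L ar

/-- An `L`-algebra. -/
structure Alg (L : Type) (ar : L → ℕ) where
  carrier : Type
  op : (f : L) → (Fin (ar f) → carrier) → carrier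

/-- Evaluation of a term in an algebra under an assignment of the variables. -/
def Term.eval {L : Type} {ar : L → ℕ} (A : Alg L ar) (ρ : ℕ → A.carrier) :
    Term L ar → A.carrier
  | .var n => ρ n
  | .app f ts => A.op f fun i => (ts i).eval A ρ

/-- Homomorphisms of `L`-algebras. -/
def IsHom {L : Type} {ar : L → ℕ} (A B : Alg L ar) (H : A.carrier → B.carrier) : Prop :=
  ∀ (f : L) (as : Fin (ar f) → A.carrier), H (A.op f as) = B.op f (H ∘ as)

/-- Justifications of an arrow `a → b`: pairs of terms `(s, t)` realized under
a common assignment. -/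
def Jus {L : Type} {ar : L → ℕ} (A : Alg L ar) (p : A.carrier × A.carrier) :
    Set (Term L ar × Term L ar) :=
  {st | ∃ ρ : ℕ → A.carrier, st.1.eval A ρ = p.1 ∧ st.2.eval A ρ = p.2}

/-- Trivial justifications in `(A, B)`: those justifying every arrow in `A` and in `B`. -/
def TrivJus {L : Type} {ar : L → ℕ} (A B : Alg L ar) : Set (Term L ar × Term L ar) :=
  {st | (∀ p : A.carrier × A.carrier, st ∈ Jus A p) ∧
        (∀ q : B.carrier × B.carrier, st ∈ Jus B q)}

/-- The arrow relation `(a→b) ≲_{(A,B)} (c→d)`: either all justifications on either side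
are trivial, or the common justifications include a non-trivial one and form a maximal
set among common justification sets with arrows of `B`. -/
def ArrLe {L : Type} {ar : L → ℕ} (A B : Alg L ar)
    (p : A.carrier × A.carrier) (q : B.carrier × B.carrier) : Prop :=
  (Jus A p ∪ Jus B q ⊆ TrivJus A B) ∨
  (TrivJus A B ⊂ Jus A p ∩ Jus B q ∧
    ∀ q' : B.carrier × B.carrier,
      TrivJus A B ⊂ Jus A p ∩ Jus B q → Jus A p ∩ Jus B q ⊆ Jus A p ∩ Jus B q' →
        TrivJus A B ⊂ Jus A p ∩ Jus B q' ∧ Jus A p ∩ Jus B q' ⊆ Jus A p ∩ Jus B q)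

/-- Similarity-based analogical proportion `a : b ≈_{(A,B)} c : d`. -/
def AP {L : Type} {ar : L → ℕ} (A B : Alg L ar) (a b : A.carrier) (c d : B.carrier) : Prop :=
  ArrLe A B (a, b) (c, d) ∧ ArrLe A B (b, a) (d, c) ∧
  ArrLe B A (c, d) (a, b) ∧ ArrLe B A (d, c) (b, a)

/-- Generalizations of an element. -/
def Gen {L : Type} {ar : L → ℕ} (A : Alg L ar) (a : A.carrier) : Set (Term L ar) :=
  {s | ∃ ρ : ℕ → A.carrier, s.eval A ρ = a}

/-- Trivial generalizations in `(A, B)`. -/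
def TrivGen {L : Type} {ar : L → ℕ} (A B : Alg L ar) : Set (Term L ar) :=
  {s | (∀ a : A.carrier, s ∈ Gen A a) ∧ (∀ b : B.carrier, s ∈ Gen B b)}

/-- `a ≲_{(A,B)} b` for elements. -/
def SimLe {L : Type} {ar : L → ℕ} (A B : Alg L ar) (a : A.carrier) (b : B.carrier) : Prop :=
  (Gen A a ∪ Gen B b ⊆ TrivGen A B) ∨
  (TrivGen A B ⊂ Gen A a ∩ Gen B b ∧
    ∀ b' : B.carrier,
      TrivGen A B ⊂ Gen A a ∩ Gen B b → Gen A a ∩ Gen B b ⊆ Gen A a ∩ Gen B b' →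
        TrivGen A B ⊂ Gen A a ∩ Gen B b' ∧ Gen A a ∩ Gen B b' ⊆ Gen A a ∩ Gen B b)

/-- The similarity relation `a ≈_{(A,B)} b`. -/
def Sim {L : Type} {ar : L → ℕ} (A B : Alg L ar) (a : A.carrier) (b : B.carrier) : Prop :=
  SimLe A B a b ∧ SimLe B A b a


lemma trivJus_subset {L : Type} {ar : L → ℕ} (A : Alg L ar) (p : A.carrier × A.carrier) :
    TrivJus A A ⊆ Jus A p := fun _ h => h.1 p

lemma id_mem_jus {L : Type} {ar : L → ℕ} (A : Alg L ar) (a : A.carrier) :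
    (Term.var 0, Term.var 0) ∈ Jus A (a, a) :=
  ⟨fun _ => a, rfl, rfl⟩

lemma arrle_refl {L : Type} {ar : L → ℕ} (A : Alg L ar) (p : A.carrier × A.carrier) :
    ArrLe A A p p := by
  by_cases h : Jus A p ⊆ TrivJus A A
  · left; rw [Set.union_self]; exact h
  · right
    have hss : TrivJus A A ⊂ Jus A p ∩ Jus A p := by
      rw [Set.inter_self, Set.ssubset_def]
      exact ⟨trivJus_subset A p, h⟩
    refine ⟨hss, fun q' _ h2 => ?_⟩
    rw [Set.inter_self] at h2
    constructor
    · rw [Set.ssubset_def]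
      refine ⟨Set.subset_inter (trivJus_subset A p) (fun x hx => (h2 (trivJus_subset A p hx)).2), ?_⟩
      intro hsub
      exact h (fun x hx => hsub (h2 hx))
    · rw [Set.inter_self]
      exact fun x hx => Set.inter_subset_left hx

/-- p-determinism: `a : a ≈_A a : d  ↔  d = a`. -/
theorem ap_p_determinism {L : Type} {ar : L → ℕ} (A : Alg L ar) (a d : A.carrier) :
    AP A A a a a d ↔ d = a := by
  constructor
  · rintro ⟨h1, -, -, -⟩
    rcases h1 with hl | ⟨hss, hmax⟩
    · have := (hl (Or.inl (id_mem_jus A a))).1 (a, d)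
      obtain ⟨ρ, h1, h2⟩ := this
      exact h2.symm.trans h1
    · have hsub : Jus A (a, a) ∩ Jus A (a, d) ⊆ Jus A (a, a) ∩ Jus A (a, a) := by
        rw [Set.inter_self]; exact Set.inter_subset_left
      obtain ⟨_, h2⟩ := hmax (a, a) hss hsub
      rw [Set.inter_self] at h2
      obtain ⟨ρ, e1, e2⟩ := (h2 (id_mem_jus A a)).2
      exact e2.symm.trans e1
  · rintro rfl
    exact ⟨arrle_refl A _, arrle_refl A _, arrle_refl A _, arrle_refl A _⟩
end

section
/- Similarity-based analogical proportions do not in general satisfy inner p-reflexivity: in the algebra with universe {a, b, c} and one unary function f with f(a)=a, f(b)=c, f(c)=c, the proportion a : a ≈ b : b fails. -/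
/-- The algebra `({a,b,c}, f)` with `f(a)=a, f(b)=c, f(c)=c`, where `a=0, b=1, c=2`. -/
abbrev A9 : Alg Unit (fun _ => 1) := ⟨Fin 3, fun _ v => ![0, 2, 2] (v 0)⟩

lemma eval_eq_one_var {t : Term Unit (fun _ => 1)} {ρ : ℕ → Fin 3}
    (h : t.eval A9 ρ = 1) : ∃ i, t = .var i := by
  cases t with
  | var i => exact ⟨i, rfl⟩
  | app f ts =>
    exfalso
    have hx : ∀ x : Fin 3, ![(0:Fin 3), 2, 2] x ≠ 1 := by decide
    exact hx _ h

/-- inner p-reflexivity fails: `a : a ≈ b : b` fails in this algebra. -/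
theorem ap_inner_p_reflexivity_fails : ¬ AP A9 A9 (0 : Fin 3) 0 1 1 := by
  rintro ⟨h, -, -, -⟩
  rcases h with h | ⟨hne, hmax⟩
  · -- (var 0, var 0) ∈ Jus (0,0) but not trivial
    have hmem : ((Term.var 0, Term.var 0) : Term Unit (fun _ => 1) × _) ∈ Jus A9 (0, 0) :=
      ⟨fun _ => 0, rfl, rfl⟩
    have htriv := h (Set.mem_union_left _ hmem)
    obtain ⟨h1, -⟩ := htriv
    obtain ⟨ρ, h01, h02⟩ := h1 ((0 : Fin 3), (1 : Fin 3))
    simp [Term.eval] at h01 h02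
    rw [h01] at h02
    exact absurd h02 (by decide)
  · have hsub : Jus A9 ((0:Fin 3), 0) ∩ Jus A9 (1, 1)
        ⊆ Jus A9 ((0:Fin 3), 0) ∩ Jus A9 (2, 2) := by
      rintro ⟨s, t⟩ ⟨h0, ρ, hs, ht⟩
      obtain ⟨i, rfl⟩ := eval_eq_one_var hs
      obtain ⟨j, rfl⟩ := eval_eq_one_var ht
      exact ⟨h0, fun _ => 2, rfl, rfl⟩
    obtain ⟨-, hback⟩ := hmax (2, 2) hne hsub
    -- witness (f x, f x)
    set w : Term Unit (fun _ => 1) := Term.app () (fun _ => Term.var 0) with hw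
    have hw0 : (w, w) ∈ Jus A9 ((0:Fin 3), 0) := by
      refine ⟨fun _ => 0, ?_, ?_⟩ <;> simp [hw, Term.eval]
    have hw2 : (w, w) ∈ Jus A9 ((2:Fin 3), 2) := by
      refine ⟨fun _ => 1, ?_, ?_⟩ <;> simp [hw, Term.eval]
    obtain ⟨-, ρ, hs, -⟩ := hback ⟨hw0, hw2⟩
    obtain ⟨i, hi⟩ := eval_eq_one_var hs
    simp [hw] at hi
end

section
/- Similarity-based analogical proportions do not in general satisfy strong p-reflexivity: in the algebra on three distinct elements {a, b, d} with no operations, a : b ≈ a : d holds with d ≠ b. -/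
/-- The algebra on `{a,b,d}` over the empty language, where `a=0, b=1, d=2`. -/
abbrev A12 : Alg Empty (fun e => e.elim) := ⟨Fin 3, fun f => f.elim⟩

lemma term_is_var (s : Term Empty (fun e => e.elim)) : ∃ n, s = .var n := by
  cases s with
  | var n => exact ⟨n, rfl⟩
  | app f _ => exact f.elim

lemma jus_triv {x y : Fin 3} (h : x ≠ y) :
    Jus A12 (x, y) ⊆ TrivJus A12 A12 := by
  rintro ⟨s, t⟩ ⟨ρ, hs, ht⟩
  obtain ⟨m, rfl⟩ := term_is_var s
  obtain ⟨n, rfl⟩ := term_is_var t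
  simp only [Term.eval] at hs ht
  have hmn : m ≠ n := by rintro rfl; exact h (hs ▸ ht ▸ rfl)
  have key : ∀ p : Fin 3 × Fin 3,
      ((Term.var m : Term Empty _), (Term.var n : Term Empty _)) ∈ Jus A12 p := by
    rintro ⟨p1, p2⟩
    exact ⟨fun k => if k = m then p1 else p2, by
      simp [Term.eval, Jus, Ne.symm hmn]⟩
  exact ⟨key, key⟩

lemma arrle_triv {x y u v : Fin 3} (h1 : x ≠ y) (h2 : u ≠ v) :
    ArrLe A12 A12 (x, y) (u, v) :=
  Or.inl (Set.union_subset (jus_triv h1) (jus_triv h2))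

/-- strong p-reflexivity fails: `a : b ≈ a : d` holds with `d ≠ b`. -/
theorem ap_strong_p_reflexivity_fails :
    AP A12 A12 (0 : Fin 3) 1 0 2 ∧ (2 : Fin 3) ≠ 1 := by
  refine ⟨⟨arrle_triv ?_ ?_, arrle_triv ?_ ?_, arrle_triv ?_ ?_, arrle_triv ?_ ?_⟩, ?_⟩ <;> decide
end

section
/- First Isomorphism Theorem (similarity-based): if H : A → B is a homomorphism of L-algebras such that for all a, b ∈ A, the arrow a → b having only trivial justifications in A implies Ha → Hb has only trivial justifications in B, then a → b ≲_{(A,B)} Ha → Hb for all a, b ∈ A. -/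
lemma eval_hom {L : Type} {ar : L → ℕ} {A B : Alg L ar}
    {H : A.carrier → B.carrier} (hH : IsHom A B H) (ρ : ℕ → A.carrier) :
    ∀ t : Term L ar, H (t.eval A ρ) = t.eval B (H ∘ ρ)
  | .var n => rfl
  | .app f ts => by
    simp only [Term.eval, hH f]
    congr 1
    funext i
    exact eval_hom hH ρ (ts i)

lemma jus_map {L : Type} {ar : L → ℕ} {A B : Alg L ar}
    {H : A.carrier → B.carrier} (hH : IsHom A B H) {a b : A.carrier}
    {st : Term L ar × Term L ar} (h : st ∈ Jus A (a, b)) :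
    st ∈ Jus B (H a, H b) := by
  obtain ⟨ρ, h1, h2⟩ := h
  exact ⟨H ∘ ρ, by rw [← eval_hom hH, h1], by rw [← eval_hom hH, h2]⟩

/-- First Isomorphism Theorem (similarity-based), homomorphism case. -/
theorem first_isomorphism_theorem {L : Type} {ar : L → ℕ} (A B : Alg L ar)
    (H : A.carrier → B.carrier) (hH : IsHom A B H)
    (htriv : ∀ a b : A.carrier,
      Jus A (a, b) ⊆ TrivJus A B → Jus B (H a, H b) ⊆ TrivJus A B) :
    ∀ a b : A.carrier, ArrLe A B (a, b) (H a, H b) := by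
  intro a b
  by_cases hA : Jus A (a, b) ⊆ TrivJus A B
  · left
    intro st hst
    rcases hst with h | h
    · exact hA h
    · exact htriv a b hA h
  · right
    have hsub : Jus A (a, b) ⊆ Jus A (a, b) ∩ Jus B (H a, H b) := fun st h =>
      ⟨h, jus_map hH h⟩
    have hstrict : TrivJus A B ⊂ Jus A (a, b) ∩ Jus B (H a, H b) := by
      constructor
      · intro st hst
        exact ⟨hst.1 (a, b), hst.2 (H a, H b)⟩
      · intro hcontra
        exact hA fun st h => hcontra (hsub h)
    refine ⟨hstrict, fun q' _ hsub' => ⟨lt_of_lt_of_le hstrict hsub', ?_⟩⟩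
    intro st hst
    exact hsub hst.1
end
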